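/- Let p be analytic on the unit disc with p(0)=1, Re(p(z)) > 0, p(z) = 1 + q·z + ... . If f and g are analytic with f(z) = z + f₁z² + ..., g(z) = z + g₁z² + ..., Re(f/g) > 0 and Re(g/(zp)) > 1/2 on the punctured disc, then |g₁| ≤ 3 and |f₁| ≤ 5. -/

import Mathlib

open Complex Metric

lemma dslope_analyticOnNhd (f : ℂ → ℂ) (hf : AnalyticOnNhd ℂ f (ball (0:ℂ) 1)) :
    AnalyticOnNhd ℂ (dslope f 0) (ball (0:ℂ) 1) := by
  intro z hz
  rcases eq_or_ne z 0 with rfl | hz0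
  · obtain ⟨p, hp⟩ := hf 0 hz
    exact hp.has_fpower_series_dslope_fslope.analyticAt
  · have h1 : AnalyticAt ℂ (fun w : ℂ => (w - 0)⁻¹ • (f w - f 0)) z := by
      exact AnalyticAt.smul (((analyticAt_id).sub analyticAt_const).inv
        (by simpa using hz0)) ((hf z hz).sub analyticAt_const)
    apply h1.congr
    filter_upwards [isOpen_ne.mem_nhds hz0] with w hw
    rw [dslope_of_ne _ hw, slope]
    rfl

lemma halfplane_deriv_le (F : ℂ → ℂ) (hF : AnalyticOnNhd ℂ F (ball (0:ℂ) 1))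
    (h0 : F 0 = 1) (hre : ∀ z ∈ ball (0:ℂ) 1, 0 < (F z).re) :
    ‖deriv F 0‖ ≤ 2 := by
  have h0m : (0:ℂ) ∈ ball (0:ℂ) 1 := by simp
  have hne : ∀ z ∈ ball (0:ℂ) 1, F z + 1 ≠ 0 := by
    intro z hz h
    have h1 : F z = -1 := by linear_combination h
    have := hre z hz
    rw [h1] at this
    norm_num at this
  set φ : ℂ → ℂ := fun z => (F z - 1) / (F z + 1) with hφ
  have hφ0 : φ 0 = 0 := by simp [hφ, h0]
  have hd : DifferentiableOn ℂ φ (ball (0:ℂ) 1) := by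
    intro z hz
    exact (((hF z hz).sub analyticAt_const).div ((hF z hz).add analyticAt_const)
      (hne z hz)).differentiableAt.differentiableWithinAt
  have hmaps : Set.MapsTo φ (ball (0:ℂ) 1) (ball (φ 0) 1) := by
    intro z hz
    rw [hφ0, mem_ball, dist_zero_right]
    have hb : ‖F z - 1‖ < ‖F z + 1‖ := by
      have key : ‖F z - 1‖ ^ 2 + 4 * (F z).re = ‖F z + 1‖ ^ 2 := by
        rw [Complex.sq_norm, Complex.sq_norm, Complex.normSq_apply, Complex.normSq_apply]
        simp [Complex.sub_re, Complex.sub_im, Complex.add_re, Complex.add_im]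
        ring
      nlinarith [hre z hz, norm_nonneg (F z - 1), norm_nonneg (F z + 1)]
    have hpos : 0 < ‖F z + 1‖ :=
      lt_of_le_of_lt (norm_nonneg _) hb
    calc ‖φ z‖ = ‖F z - 1‖ / ‖F z + 1‖ := by
          simp [hφ, norm_div]
      _ < 1 := (div_lt_one hpos).mpr hb
  have hS := Complex.norm_deriv_le_div_of_mapsTo_ball hd (hmaps.mono_right ball_subset_closedBall) one_pos
  have hFd : DifferentiableAt ℂ F 0 := (hF 0 h0m).differentiableAt
  have hne0 : F 0 + 1 ≠ 0 := hne 0 h0m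
  have hdφ : deriv φ 0 = deriv F 0 / 2 := by
    rw [hφ]
    rw [deriv_fun_div (hFd.sub_const 1) (hFd.add_const 1) hne0]
    rw [deriv_sub_const, deriv_add_const, h0]
    ring
  rw [hdφ, norm_div] at hS
  simp only [Complex.norm_two] at hS
  norm_num at hS
  linarith [hS]

lemma mul_dslope (f : ℂ → ℂ) (hf0 : f 0 = 0) (z : ℂ) : z * dslope f 0 z = f z := by
  have := sub_smul_dslope f 0 z
  simpa [hf0, smul_eq_mul] using this

lemma iteratedDeriv_two_eq (f : ℂ → ℂ) (hf : AnalyticOnNhd ℂ f (ball (0:ℂ) 1))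
    (hf0 : f 0 = 0) : iteratedDeriv 2 f 0 = 2 * deriv (dslope f 0) 0 := by
  set F := dslope f 0 with hFdef
  have hFa : AnalyticOnNhd ℂ F (ball (0:ℂ) 1) := dslope_analyticOnNhd f hf
  have h0m : (0:ℂ) ∈ ball (0:ℂ) 1 := by simp
  have hball : ball (0:ℂ) 1 ∈ nhds (0:ℂ) := isOpen_ball.mem_nhds h0m
  -- deriv f = F + z * F' on the ball
  have hderiv : ∀ᶠ z in nhds (0:ℂ), deriv f z = F z + z * deriv F z := by
    filter_upwards [hball] with z hz
    have hFz : DifferentiableAt ℂ F z := (hFa z hz).differentiableAt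
    have hfe : f = fun w => w * F w := by
      funext w; rw [mul_dslope f hf0 w]
    rw [hfe]
    rw [deriv_fun_mul differentiableAt_fun_id hFz]
    simp
  have h2 : iteratedDeriv 2 f 0 = deriv (deriv f) 0 := by
    rw [iteratedDeriv_succ, iteratedDeriv_one]
  rw [h2, Filter.EventuallyEq.deriv_eq hderiv]
  have hF0 : DifferentiableAt ℂ F 0 := (hFa 0 h0m).differentiableAt
  have hF'0 : DifferentiableAt ℂ (deriv F) 0 := ((hFa.deriv 0 h0m)).differentiableAt
  rw [deriv_fun_add hF0 (show DifferentiableAt ℂ (fun x => x * deriv F x) 0 from differentiableAt_fun_id.mul hF'0)]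
  rw [deriv_fun_mul differentiableAt_fun_id hF'0]
  simp
  ring

theorem stmt_1 (p f g : ℂ → ℂ) (q f₁ g₁ : ℂ)
    (hp : AnalyticOn ℂ p (ball (0:ℂ) 1)) (hp0 : p 0 = 1)
    (hpre : ∀ z ∈ ball (0:ℂ) 1, 0 < (p z).re)
    (hpq : deriv p 0 = q)
    (hf : AnalyticOn ℂ f (ball (0:ℂ) 1)) (hf0 : f 0 = 0)
    (hf1 : deriv f 0 = 1) (hf2 : iteratedDeriv 2 f 0 = 2 * f₁)
    (hg : AnalyticOn ℂ g (ball (0:ℂ) 1)) (hg0 : g 0 = 0)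
    (hg1 : deriv g 0 = 1) (hg2 : iteratedDeriv 2 g 0 = 2 * g₁)
    (hfg : ∀ z ∈ ball (0:ℂ) 1, z ≠ 0 → 0 < (f z / g z).re)
    (hgp : ∀ z ∈ ball (0:ℂ) 1, z ≠ 0 → 1/2 < (g z / (z * p z)).re) :
    ‖g₁‖ ≤ 3 ∧ ‖f₁‖ ≤ 5 := by
  have h0m : (0:ℂ) ∈ ball (0:ℂ) 1 := by simp
  have hp' : AnalyticOnNhd ℂ p (ball (0:ℂ) 1) :=
    (isOpen_ball.analyticOn_iff_analyticOnNhd).mp hp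
  have hf' : AnalyticOnNhd ℂ f (ball (0:ℂ) 1) :=
    (isOpen_ball.analyticOn_iff_analyticOnNhd).mp hf
  have hg' : AnalyticOnNhd ℂ g (ball (0:ℂ) 1) :=
    (isOpen_ball.analyticOn_iff_analyticOnNhd).mp hg
  set F := dslope f 0 with hFdef
  set G := dslope g 0 with hGdef
  have hFa : AnalyticOnNhd ℂ F (ball (0:ℂ) 1) := dslope_analyticOnNhd f hf'
  have hGa : AnalyticOnNhd ℂ G (ball (0:ℂ) 1) := dslope_analyticOnNhd g hg'
  have hF0 : F 0 = 1 := by rw [hFdef, dslope_same, hf1]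
  have hG0 : G 0 = 1 := by rw [hGdef, dslope_same, hg1]
  have hFz : ∀ z : ℂ, z ≠ 0 → F z = f z / z := by
    intro z hz
    have := mul_dslope f hf0 z
    field_simp [hFdef] at this ⊢
    linear_combination this
  have hGz : ∀ z : ℂ, z ≠ 0 → G z = g z / z := by
    intro z hz
    have := mul_dslope g hg0 z
    field_simp [hGdef] at this ⊢
    linear_combination this
  -- p z ≠ 0 on ball
  have hpne : ∀ z ∈ ball (0:ℂ) 1, p z ≠ 0 := by
    intro z hz h
    have := hpre z hz
    rw [h] at this
    simp at this
  -- g z ≠ 0 for z ≠ 0 in ball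
  have hgne : ∀ z ∈ ball (0:ℂ) 1, z ≠ 0 → g z ≠ 0 := by
    intro z hz hz0 h
    have := hgp z hz hz0
    rw [h] at this
    norm_num at this
  -- G z ≠ 0 on ball
  have hGne : ∀ z ∈ ball (0:ℂ) 1, G z ≠ 0 := by
    intro z hz
    rcases eq_or_ne z 0 with rfl | hz0
    · rw [hG0]; exact one_ne_zero
    · rw [hGz z hz0]
      exact div_ne_zero (hgne z hz hz0) hz0
  -- derivatives of F, G at 0
  have hdF : deriv F 0 = f₁ := by
    have := iteratedDeriv_two_eq f hf' hf0
    rw [hf2] at this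
    have h2 : (2:ℂ) ≠ 0 := two_ne_zero
    exact (mul_left_cancel₀ h2 this).symm
  have hdG : deriv G 0 = g₁ := by
    have := iteratedDeriv_two_eq g hg' hg0
    rw [hg2] at this
    exact (mul_left_cancel₀ two_ne_zero this).symm
  -- |q| ≤ 2
  have hq2 : ‖q‖ ≤ 2 := by
    rw [← hpq]
    exact halfplane_deriv_le p hp' hp0 hpre
  -- k = G / p, K = 2k - 1
  set K : ℂ → ℂ := fun z => 2 * (G z / p z) - 1 with hKdef
  have hKa : AnalyticOnNhd ℂ K (ball (0:ℂ) 1) := by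
    intro z hz
    exact (analyticAt_const.mul ((hGa z hz).div (hp' z hz) (hpne z hz))).sub analyticAt_const
  have hK0 : K 0 = 1 := by simp [hKdef, hG0, hp0]; norm_num
  have hKre : ∀ z ∈ ball (0:ℂ) 1, 0 < (K z).re := by
    intro z hz
    rcases eq_or_ne z 0 with rfl | hz0
    · rw [hK0]; norm_num
    · have hh : G z / p z = g z / (z * p z) := by
        rw [hGz z hz0]
        field_simp
      have := hgp z hz hz0
      rw [hKdef]
      simp only [Complex.sub_re, Complex.mul_re, Complex.re_ofNat, Complex.im_ofNat,
        Complex.one_re, hh]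
      simp
      linarith
  have hKderiv : ‖deriv K 0‖ ≤ 2 := halfplane_deriv_le K hKa hK0 hKre
  -- deriv K 0 = 2 * (g₁ - q)
  have hGd : DifferentiableAt ℂ G 0 := (hGa 0 h0m).differentiableAt
  have hpd : DifferentiableAt ℂ p 0 := (hp' 0 h0m).differentiableAt
  have hdK : deriv K 0 = 2 * (g₁ - q) := by
    rw [hKdef]
    rw [deriv_sub_const, deriv_const_mul _ (d := fun z => G z / p z) (hGd.div hpd (by rw [hp0]; exact one_ne_zero))]
    rw [deriv_fun_div hGd hpd (by rw [hp0]; exact one_ne_zero)]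
    rw [hG0, hp0, hdG, hpq]
    ring
  have hg1_sub : ‖g₁ - q‖ ≤ 1 := by
    rw [hdK, norm_mul] at hKderiv
    simp only [Complex.norm_two] at hKderiv
    linarith
  have hg3 : ‖g₁‖ ≤ 3 := by
    calc ‖g₁‖ = ‖(g₁ - q) + q‖ := by ring_nf
      _ ≤ ‖g₁ - q‖ + ‖q‖ := norm_add_le _ _
      _ ≤ 1 + 2 := add_le_add hg1_sub hq2
      _ = 3 := by norm_num
  refine ⟨hg3, ?_⟩
  -- h = F / G
  set H : ℂ → ℂ := fun z => F z / G z with hHdef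
  have hHa : AnalyticOnNhd ℂ H (ball (0:ℂ) 1) := by
    intro z hz
    exact (hFa z hz).div (hGa z hz) (hGne z hz)
  have hH0 : H 0 = 1 := by simp [hHdef, hF0, hG0]
  have hHre : ∀ z ∈ ball (0:ℂ) 1, 0 < (H z).re := by
    intro z hz
    rcases eq_or_ne z 0 with rfl | hz0
    · rw [hH0]; norm_num
    · have hh : H z = f z / g z := by
        rw [hHdef]
        simp only
        rw [hFz z hz0, hGz z hz0]
        field_simp
      rw [hh]
      exact hfg z hz hz0
  have hHderiv : ‖deriv H 0‖ ≤ 2 := halfplane_deriv_le H hHa hH0 hHre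
  have hFd : DifferentiableAt ℂ F 0 := (hFa 0 h0m).differentiableAt
  have hdH : deriv H 0 = f₁ - g₁ := by
    rw [hHdef]
    rw [deriv_fun_div hFd hGd (by rw [hG0]; exact one_ne_zero)]
    rw [hF0, hG0, hdF, hdG]
    ring
  rw [hdH] at hHderiv
  calc ‖f₁‖ = ‖(f₁ - g₁) + g₁‖ := by ring_nf
    _ ≤ ‖f₁ - g₁‖ + ‖g₁‖ := norm_add_le _ _
    _ ≤ 2 + 3 := add_le_add hHderiv hg3
    _ = 5 := by norm_num
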